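/- Scalar multiplication scales the d₁ distance homogeneously: for all S,T∈𝒯 and all α with −1≤α≤1, d₁(α⊙S, α⊙T) = |α|·d₁(S,T). -/

import Mathlib

open MeasureTheory ProbabilityTheory Filter Topology

noncomputable section

namespace ATM

/-- The space 𝒯 of transport maps on [s₁, s₂]: non-decreasing self-maps of
[s₁, s₂] fixing the endpoints. -/
def IsTransport (s₁ s₂ : ℝ) (T : ℝ → ℝ) : Prop :=
  MonotoneOn T (Set.Icc s₁ s₂) ∧ Set.MapsTo T (Set.Icc s₁ s₂) (Set.Icc s₁ s₂) ∧
    T s₁ = s₁ ∧ T s₂ = s₂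

/-- Generalized (left-continuous) inverse T⁻¹(x) = inf{y ∈ [s₁,s₂] : T(y) ≥ x}. -/
def geninv (s₁ s₂ : ℝ) (T : ℝ → ℝ) : ℝ → ℝ :=
  fun x => sInf {y | y ∈ Set.Icc s₁ s₂ ∧ x ≤ T y}

/-- L¹ distance d₁(S,T) = ∫_𝒮 |S-T| dλ. -/
def d1 (s₁ s₂ : ℝ) (S T : ℝ → ℝ) : ℝ := ∫ x in s₁..s₂, |S x - T x|

/-- L^q distance d_q(S,T) = (∫_𝒮 |S-T|^q dλ)^{1/q}. -/
def dq (s₁ s₂ q : ℝ) (S T : ℝ → ℝ) : ℝ := (∫ x in s₁..s₂, |S x - T x| ^ q) ^ (1 / q)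

/-- Sup distance d_∞(S,T) = sup_{x ∈ 𝒮} |S(x) - T(x)|. -/
def dinf (s₁ s₂ : ℝ) (S T : ℝ → ℝ) : ℝ := ⨆ x : Set.Icc s₁ s₂, |S x.1 - T x.1|

/-- Addition on 𝒯: T₁ ⊕ T₂ = T₂ ∘ T₁. -/
def oplus (T₁ T₂ : ℝ → ℝ) : ℝ → ℝ := T₂ ∘ T₁

/-- Scalar multiplication α ⊙ T for -1 ≤ α ≤ 1. -/
def oneSmul (s₁ s₂ α : ℝ) (T : ℝ → ℝ) : ℝ → ℝ := fun x =>
  if 0 < α then x + α * (T x - x)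
  else if α = 0 then x
  else x + α * (x - geninv s₁ s₂ T x)

/-- Scalar multiplication α ⊙ T for general α, via b = ⌊|α|⌋, a = |α| - b. -/
def odot (s₁ s₂ α : ℝ) (T : ℝ → ℝ) : ℝ → ℝ :=
  if |α| ≤ 1 then oneSmul s₁ s₂ α T
  else if 0 < α then (oneSmul s₁ s₂ (Int.fract α) T) ∘ T^[(⌊α⌋).toNat]
  else (oneSmul s₁ s₂ (Int.fract |α|) (geninv s₁ s₂ T)) ∘ (geninv s₁ s₂ T)^[(⌊|α|⌋).toNat]

variable {Ω : Type*}

/-- φ_e(S) = α ⊙ S ⊕ e = e ∘ (α ⊙ S). -/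
def phi (s₁ s₂ α : ℝ) (e S : ℝ → ℝ) : ℝ → ℝ := e ∘ odot s₁ s₂ α S

/-- Iterated random maps φ̃_{i,m}(S) = φ_{ε_i} ∘ ⋯ ∘ φ_{ε_{i-m+1}}(S). -/
def phiIter (s₁ s₂ α : ℝ) (ε : ℤ → Ω → ℝ → ℝ) : ℕ → ℤ → (ℝ → ℝ) → Ω → ℝ → ℝ
  | 0, _, S, _ => S
  | m + 1, i, S, ω => phi s₁ s₂ α (ε i ω) (phiIter s₁ s₂ α ε m (i - 1) S ω)

/-- Concurrent scalar multiplication β ⊛ T for β : 𝒮 → [-1,1]. -/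
def bsmul (s₁ s₂ : ℝ) (β T : ℝ → ℝ) : ℝ → ℝ := fun x =>
  if 0 < β x then x + β x * (T x - x)
  else if β x = 0 then x
  else x + β x * (x - geninv s₁ s₂ T x)

/-- φ_e(S) = β ⊛ S ⊕ e for the concurrent model. -/
def cphi (s₁ s₂ : ℝ) (β e S : ℝ → ℝ) : ℝ → ℝ := e ∘ bsmul s₁ s₂ β S

/-- Iterated random maps for the concurrent model. -/
def cphiIter (s₁ s₂ : ℝ) (β : ℝ → ℝ) (ε : ℤ → Ω → ℝ → ℝ) : ℕ → ℤ → (ℝ → ℝ) → Ω → ℝ → ℝ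
  | 0, _, S, _ => S
  | m + 1, i, S, ω => cphi s₁ s₂ β (ε i ω) (cphiIter s₁ s₂ β ε m (i - 1) S ω)

/-- The chain α_p ⊙ S₁ ⊕ α_{p-1} ⊙ S₂ ⊕ ⋯ ⊕ α₁ ⊙ S_p, where `a k` denotes α_{k+1}
and `S k` denotes S_{k+1} (0-based). Since A ⊕ B = B ∘ A, the map α_p ⊙ S₁ acts first. -/
def atmChain (s₁ s₂ : ℝ) {p : ℕ} (a : Fin p → ℝ) (S : Fin p → ℝ → ℝ) : ℝ → ℝ :=
  fun x => Fin.foldl p (fun y k => odot s₁ s₂ (a k.rev) (S k) y) x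

/-- Υ_e(𝐒) = (S₂, …, S_p, α_p ⊙ S₁ ⊕ ⋯ ⊕ α₁ ⊙ S_p ⊕ e). -/
def upsilon (s₁ s₂ : ℝ) {p : ℕ} (a : Fin p → ℝ) (e : ℝ → ℝ) (S : Fin p → ℝ → ℝ) :
    Fin p → ℝ → ℝ :=
  fun j => if h : (j : ℕ) + 1 < p then S ⟨(j : ℕ) + 1, h⟩ else e ∘ atmChain s₁ s₂ a S

/-- Iterated random maps Υ̃_{i,m}(𝐒) = Υ_{ε_i} ∘ ⋯ ∘ Υ_{ε_{i-m+1}}(𝐒). -/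
def upsilonIter (s₁ s₂ : ℝ) {p : ℕ} (a : Fin p → ℝ) (ε : ℤ → Ω → ℝ → ℝ) :
    ℕ → ℤ → (Fin p → ℝ → ℝ) → Ω → Fin p → ℝ → ℝ
  | 0, _, S, _ => S
  | m + 1, i, S, ω => upsilon s₁ s₂ a (ε i ω) (upsilonIter s₁ s₂ a ε m (i - 1) S ω)

/-- Product L^q metric on 𝒯^p. -/
def dqProd (s₁ s₂ q : ℝ) {p : ℕ} (S R : Fin p → ℝ → ℝ) : ℝ :=
  Real.sqrt (∑ k, (dq s₁ s₂ q (S k) (R k)) ^ 2)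

/-- Product L¹ metric on 𝒯^p. -/
def d1Prod (s₁ s₂ : ℝ) {p : ℕ} (S R : Fin p → ℝ → ℝ) : ℝ :=
  Real.sqrt (∑ k, (d1 s₁ s₂ (S k) (R k)) ^ 2)

/-- Joint measurability of a random function. -/
def JM [MeasurableSpace Ω] (f : Ω → ℝ → ℝ) : Prop :=
  Measurable fun q : Ω × ℝ => f q.1 q.2

/-- (ε_i)_{i ∈ ℤ} are i.i.d. random elements. -/
def IID [MeasurableSpace Ω] (P : Measure Ω) (ε : ℤ → Ω → ℝ → ℝ) : Prop :=
  iIndepFun ε P ∧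
    ∀ i j : ℤ, Measure.map (ε i) P = Measure.map (ε j) P

/-- Stationarity of a ℤ-indexed function-valued process: shift invariance of the joint law. -/
def Stationary [MeasurableSpace Ω] (P : Measure Ω) (X : ℤ → Ω → ℝ → ℝ) : Prop :=
  Measure.map (fun ω => fun i : ℤ => X (i + 1) ω) P =
    Measure.map (fun ω => fun i : ℤ => X i ω) P

/-- Completeness of a class of maps under the sup metric d_∞ on [s₁,s₂]. -/
def CompleteUnder (s₁ s₂ : ℝ) (TT : Set (ℝ → ℝ)) : Prop :=
  ∀ f : ℕ → ℝ → ℝ, (∀ n, f n ∈ TT) →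
    (∀ δ : ℝ, 0 < δ → ∃ N, ∀ m ≥ N, ∀ n ≥ N, dinf s₁ s₂ (f m) (f n) < δ) →
    ∃ g ∈ TT, Tendsto (fun n => dinf s₁ s₂ (f n) g) atTop (𝓝 0)

/-- Bi-Lipschitz with constant K on [s₁,s₂]. -/
def BiLipschitzOn (s₁ s₂ K : ℝ) (T : ℝ → ℝ) : Prop :=
  ∀ x ∈ Set.Icc s₁ s₂, ∀ y ∈ Set.Icc s₁ s₂,
    K⁻¹ * |x - y| ≤ |T x - T y| ∧ |T x - T y| ≤ K * |x - y|

/-- Empirical least-squares criterion l₊. -/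
def lplusD (s₁ s₂ : ℝ) (F : ℕ → ℝ → ℝ) (n : ℕ) (a : ℝ) : ℝ :=
  ∑ i ∈ Finset.Icc 2 n, ∫ x in s₁..s₂, (F i x - x - a * (F (i - 1) x - x)) ^ 2

/-- Empirical least-squares criterion l₋. -/
def lminusD (s₁ s₂ : ℝ) (F : ℕ → ℝ → ℝ) (n : ℕ) (a : ℝ) : ℝ :=
  ∑ i ∈ Finset.Icc 2 n, ∫ x in s₁..s₂,
    (F i x - x - a * (x - geninv s₁ s₂ (F (i - 1)) x)) ^ 2

/-- Empirical autocovariance ρ̂¹₊. -/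
def rho1pD (s₁ s₂ : ℝ) (F : ℕ → ℝ → ℝ) (n : ℕ) : ℝ :=
  (1 / ((n : ℝ) - 1)) * ∑ i ∈ Finset.Icc 2 n, ∫ x in s₁..s₂, (F i x - x) * (F (i - 1) x - x)

/-- Empirical autocovariance ρ̂¹₋. -/
def rho1mD (s₁ s₂ : ℝ) (F : ℕ → ℝ → ℝ) (n : ℕ) : ℝ :=
  (1 / ((n : ℝ) - 1)) * ∑ i ∈ Finset.Icc 2 n, ∫ x in s₁..s₂,
    (F i x - x) * (x - geninv s₁ s₂ (F (i - 1)) x)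

/-- Empirical second moment ρ̂⁰₊. -/
def rho0pD (s₁ s₂ : ℝ) (F : ℕ → ℝ → ℝ) (n : ℕ) : ℝ :=
  (1 / ((n : ℝ) - 1)) * ∑ i ∈ Finset.Icc 2 n, ∫ x in s₁..s₂, (F (i - 1) x - x) ^ 2

/-- Empirical second moment ρ̂⁰₋. -/
def rho0mD (s₁ s₂ : ℝ) (F : ℕ → ℝ → ℝ) (n : ℕ) : ℝ :=
  (1 / ((n : ℝ) - 1)) * ∑ i ∈ Finset.Icc 2 n, ∫ x in s₁..s₂,
    (x - geninv s₁ s₂ (F (i - 1)) x) ^ 2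

/-- Pointwise least-squares criterion l₊(·|x). -/
def lplusPt (F : ℕ → ℝ → ℝ) (n : ℕ) (x a : ℝ) : ℝ :=
  ∑ i ∈ Finset.Icc 2 n, (F i x - x - a * (F (i - 1) x - x)) ^ 2

/-- Pointwise least-squares criterion l₋(·|x). -/
def lminusPt (s₁ s₂ : ℝ) (F : ℕ → ℝ → ℝ) (n : ℕ) (x a : ℝ) : ℝ :=
  ∑ i ∈ Finset.Icc 2 n, (F i x - x - a * (x - geninv s₁ s₂ (F (i - 1)) x)) ^ 2

/-- Pointwise empirical autocovariance ρ̂¹₊(x). -/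
def rho1pPt (F : ℕ → ℝ → ℝ) (n : ℕ) (x : ℝ) : ℝ :=
  (1 / ((n : ℝ) - 1)) * ∑ i ∈ Finset.Icc 2 n, (F i x - x) * (F (i - 1) x - x)

/-- Pointwise empirical autocovariance ρ̂¹₋(x). -/
def rho1mPt (s₁ s₂ : ℝ) (F : ℕ → ℝ → ℝ) (n : ℕ) (x : ℝ) : ℝ :=
  (1 / ((n : ℝ) - 1)) * ∑ i ∈ Finset.Icc 2 n, (F i x - x) * (x - geninv s₁ s₂ (F (i - 1)) x)

/-- Pointwise empirical second moment ρ̂⁰₊(x). -/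
def rho0pPt (F : ℕ → ℝ → ℝ) (n : ℕ) (x : ℝ) : ℝ :=
  (1 / ((n : ℝ) - 1)) * ∑ i ∈ Finset.Icc 2 n, (F (i - 1) x - x) ^ 2

/-- Pointwise empirical second moment ρ̂⁰₋(x). -/
def rho0mPt (s₁ s₂ : ℝ) (F : ℕ → ℝ → ℝ) (n : ℕ) (x : ℝ) : ℝ :=
  (1 / ((n : ℝ) - 1)) * ∑ i ∈ Finset.Icc 2 n, (x - geninv s₁ s₂ (F (i - 1)) x) ^ 2


lemma aux_bddBelow (s₁ s₂ : ℝ) (T : ℝ → ℝ) (y : ℝ) :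
    BddBelow {z | z ∈ Set.Icc s₁ s₂ ∧ y ≤ T z} := ⟨s₁, fun z hz => hz.1.1⟩

lemma aux_nonempty {s₁ s₂ : ℝ} (hs : s₁ ≤ s₂) {T : ℝ → ℝ} (hT : IsTransport s₁ s₂ T)
    {y : ℝ} (hy : y ≤ s₂) : {z | z ∈ Set.Icc s₁ s₂ ∧ y ≤ T z}.Nonempty :=
  ⟨s₂, ⟨hs, le_refl _⟩, by rw [hT.2.2.2]; exact hy⟩

lemma geninv_mem {s₁ s₂ : ℝ} (hs : s₁ ≤ s₂) {T : ℝ → ℝ} (hT : IsTransport s₁ s₂ T)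
    {y : ℝ} (hy : y ∈ Set.Icc s₁ s₂) : geninv s₁ s₂ T y ∈ Set.Icc s₁ s₂ := by
  constructor
  · exact le_csInf (aux_nonempty hs hT hy.2) fun z hz => hz.1.1
  · exact csInf_le (aux_bddBelow s₁ s₂ T y) ⟨⟨hs, le_refl _⟩, by rw [hT.2.2.2]; exact hy.2⟩

lemma geninv_monotoneOn {s₁ s₂ : ℝ} (hs : s₁ ≤ s₂) {T : ℝ → ℝ} (hT : IsTransport s₁ s₂ T) :
    MonotoneOn (geninv s₁ s₂ T) (Set.Icc s₁ s₂) := by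
  intro a ha b hb hab
  exact csInf_le_csInf (aux_bddBelow s₁ s₂ T a) (aux_nonempty hs hT hb.2)
    (fun z hz => ⟨hz.1, hab.trans hz.2⟩)

lemma geninv_le_iff {s₁ s₂ : ℝ} (hs : s₁ ≤ s₂) {T : ℝ → ℝ} (hT : IsTransport s₁ s₂ T)
    {x y : ℝ} (hx : x ∈ Set.Icc s₁ s₂) (hy : y ∈ Set.Icc s₁ s₂)
    (hne : x ≠ geninv s₁ s₂ T y) : y ≤ T x ↔ geninv s₁ s₂ T y ≤ x := by
  constructor
  · intro h; exact csInf_le (aux_bddBelow s₁ s₂ T y) ⟨hx, h⟩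
  · intro h
    have hlt : geninv s₁ s₂ T y < x := lt_of_le_of_ne h hne.symm
    obtain ⟨x', hx', hx'x⟩ := exists_lt_of_csInf_lt (aux_nonempty hs hT hy.2) hlt
    exact hx'.2.trans (hT.1 hx'.1 hx hx'x.le)

-- key Fubini lemma
lemma integral_abs_geninv {s₁ s₂ : ℝ} (hs : s₁ ≤ s₂) {S T : ℝ → ℝ}
    (hS : IsTransport s₁ s₂ S) (hT : IsTransport s₁ s₂ T) :
    ∫ y in s₁..s₂, |geninv s₁ s₂ S y - geninv s₁ s₂ T y| = ∫ x in s₁..s₂, |S x - T x| := by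
  set I : Set ℝ := Set.Icc s₁ s₂ with hI
  set c : ℝ → ℝ := fun x => max s₁ (min x s₂) with hc
  have hc_mono : Monotone c := fun a b hab => max_le_max le_rfl (min_le_min hab le_rfl)
  have hc_mem : ∀ x, c x ∈ I := fun x => ⟨le_max_left _ _, max_le hs (min_le_right _ _)⟩
  have hc_id : ∀ x ∈ I, c x = x := by
    intro x hx
    simp only [hc]
    rw [min_eq_left hx.2, max_eq_right hx.1]
  set S' : ℝ → ℝ := fun x => S (c x) with hS'def
  set T' : ℝ → ℝ := fun x => T (c x) with hT'def
  set G : ℝ → ℝ := fun y => geninv s₁ s₂ S (c y) with hGdef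
  set H : ℝ → ℝ := fun y => geninv s₁ s₂ T (c y) with hHdef
  have hS'mono : Monotone S' := fun a b hab => hS.1 (hc_mem a) (hc_mem b) (hc_mono hab)
  have hT'mono : Monotone T' := fun a b hab => hT.1 (hc_mem a) (hc_mem b) (hc_mono hab)
  have hGmono : Monotone G := fun a b hab =>
    geninv_monotoneOn hs hS (hc_mem a) (hc_mem b) (hc_mono hab)
  have hHmono : Monotone H := fun a b hab =>
    geninv_monotoneOn hs hT (hc_mem a) (hc_mem b) (hc_mono hab)
  have hS'mem : ∀ x, S' x ∈ I := fun x => hS.2.1 (hc_mem x)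
  have hT'mem : ∀ x, T' x ∈ I := fun x => hT.2.1 (hc_mem x)
  have hGmem : ∀ x, G x ∈ I := fun x => geninv_mem hs hS (hc_mem x)
  have hHmem : ∀ x, H x ∈ I := fun x => geninv_mem hs hT (hc_mem x)
  -- the symmetric-difference region
  set U : Set (ℝ × ℝ) := {p | p.2 ≤ S' p.1} with hU
  set V : Set (ℝ × ℝ) := {p | p.2 ≤ T' p.1} with hV
  set D : Set (ℝ × ℝ) := ((U \ V) ∪ (V \ U)) ∩ I ×ˢ I with hD
  have hUm : MeasurableSet U :=
    measurableSet_le measurable_snd (hS'mono.measurable.comp measurable_fst)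
  have hVm : MeasurableSet V :=
    measurableSet_le measurable_snd (hT'mono.measurable.comp measurable_fst)
  have hDm : MeasurableSet D :=
    (((hUm.diff hVm).union (hVm.diff hUm)).inter (measurableSet_Icc.prod measurableSet_Icc))
  -- x-slices
  have hx_slice : ∀ x ∈ I, Prod.mk x ⁻¹' D
      = Set.Ioc (min (S' x) (T' x)) (max (S' x) (T' x)) := by
    intro x hx
    have hsub : Set.Ioc (min (S' x) (T' x)) (max (S' x) (T' x)) ⊆ I := fun z hz =>
      ⟨(le_min (hS'mem x).1 (hT'mem x).1).trans hz.1.le,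
        hz.2.trans (max_le (hS'mem x).2 (hT'mem x).2)⟩
    ext y
    simp only [hD, Set.mem_preimage, Set.mem_inter_iff, Set.mem_union, Set.mem_diff,
      Set.mem_prod, hU, hV, Set.mem_setOf_eq, Set.mem_Ioc]
    constructor
    · rintro ⟨h1 | h1, _, _⟩
      · exact ⟨lt_of_not_ge (fun h => h1.2 (h.trans (min_le_right _ _))),
          h1.1.trans (le_max_left _ _)⟩
      · exact ⟨lt_of_not_ge (fun h => h1.2 (h.trans (min_le_left _ _))),
          h1.1.trans (le_max_right _ _)⟩
    · intro hyz
      refine ⟨?_, hx, hsub hyz⟩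
      rcases le_total (S' x) (T' x) with hle | hle
      · right
        rw [min_eq_left hle] at hyz; rw [max_eq_right hle] at hyz
        exact ⟨hyz.2, fun h => absurd hyz.1 (not_lt_of_ge h)⟩
      · left
        rw [min_eq_right hle] at hyz; rw [max_eq_left hle] at hyz
        exact ⟨hyz.2, fun h => absurd hyz.1 (not_lt_of_ge h)⟩
  have hx_slice' : ∀ x, x ∉ I → Prod.mk x ⁻¹' D = ∅ := by
    intro x hx
    ext y
    simp only [hD, Set.mem_preimage, Set.mem_inter_iff, Set.mem_prod, Set.mem_empty_iff_false,
      iff_false]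
    rintro ⟨-, hx', -⟩; exact hx hx'
  have h1 : (volume.prod volume) D = ∫⁻ x in I, ENNReal.ofReal |S' x - T' x| := by
    rw [Measure.prod_apply hDm, ← lintegral_indicator (measurableSet_Icc (a := s₁) (b := s₂)) (fun x => ENNReal.ofReal |S' x - T' x|)]
    refine lintegral_congr fun x => ?_
    by_cases hx : x ∈ I
    · rw [hx_slice x hx, Set.indicator_of_mem hx, Real.volume_Ioc, max_sub_min_eq_abs, abs_sub_comm]
    · rw [hx_slice' x hx, Set.indicator_of_notMem hx]; simp
  -- y-slices
  have hy_slice : ∀ y ∈ I, volume ((fun x => (x, y)) ⁻¹' D) = ENNReal.ofReal |G y - H y| := by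
    intro y hy
    set E : Set ℝ := Set.Ico (min (G y) (H y)) (max (G y) (H y)) with hE
    have hEsub : E ⊆ I := fun z hz =>
      ⟨(le_min (hGmem y).1 (hHmem y).1).trans hz.1,
        hz.2.le.trans (max_le (hGmem y).2 (hHmem y).2)⟩
    have hGy : G y = geninv s₁ s₂ S y := by rw [hGdef]; simp only [hc_id y hy]
    have hHy : H y = geninv s₁ s₂ T y := by rw [hHdef]; simp only [hc_id y hy]
    have hiff : ∀ x ∈ I, x ≠ G y → x ≠ H y → ((x, y) ∈ D ↔ x ∈ E) := by
      intro x hx hxG hxH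
      have hSx : S' x = S x := by rw [hS'def]; simp only [hc_id x hx]
      have hTx : T' x = T x := by rw [hT'def]; simp only [hc_id x hx]
      have iS : y ≤ S x ↔ G y ≤ x := by
        rw [hGy]; exact geninv_le_iff hs hS hx hy (hGy ▸ hxG)
      have iT : y ≤ T x ↔ H y ≤ x := by
        rw [hHy]; exact geninv_le_iff hs hT hx hy (hHy ▸ hxH)
      simp only [hD, Set.mem_inter_iff, Set.mem_union, Set.mem_diff, Set.mem_prod,
        hU, hV, Set.mem_setOf_eq, hSx, hTx, iS, iT, hE, Set.mem_Ico]
      constructor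
      · rintro ⟨h1 | h1, -, -⟩
        · exact ⟨min_le_left _ _ |>.trans h1.1, lt_of_lt_of_le
            (lt_of_not_ge (fun h => h1.2 h) |>.trans_le (le_refl _)) (le_max_right _ _) |>.trans_le (le_refl _)⟩
        · exact ⟨min_le_right _ _ |>.trans h1.1,
            lt_of_not_ge (fun h => h1.2 h) |>.trans_le (le_max_left _ _)⟩
      · intro hxE
        refine ⟨?_, hx, hy⟩
        rcases le_total (G y) (H y) with hle | hle
        · left
          rw [min_eq_left hle, max_eq_right hle] at hxE
          exact ⟨hxE.1, fun h => absurd hxE.2 (not_lt_of_ge h)⟩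
        · right
          rw [min_eq_right hle, max_eq_left hle] at hxE
          exact ⟨hxE.1, fun h => absurd hxE.2 (not_lt_of_ge h)⟩
    have hpair : volume ({G y, H y} : Set ℝ) = 0 := (Set.toFinite _).measure_zero _
    have hsub1 : ((fun x => (x, y)) ⁻¹' D) \ E ⊆ {G y, H y} := by
      intro x hx
      by_contra hmem
      simp only [Set.mem_insert_iff, Set.mem_singleton_iff, not_or] at hmem
      have hxI : x ∈ I := hx.1.2.1
      exact hx.2 ((hiff x hxI hmem.1 hmem.2).mp hx.1)
    have hsub2 : E \ ((fun x => (x, y)) ⁻¹' D) ⊆ {G y, H y} := by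
      intro x hx
      by_contra hmem
      simp only [Set.mem_insert_iff, Set.mem_singleton_iff, not_or] at hmem
      exact hx.2 ((hiff x (hEsub hx.1) hmem.1 hmem.2).mpr hx.1)
    have hae : ((fun x => (x, y)) ⁻¹' D) =ᵐ[volume] E :=
      (MeasureTheory.ae_eq_set).mpr
        ⟨measure_mono_null hsub1 hpair, measure_mono_null hsub2 hpair⟩
    rw [measure_congr hae, hE, Real.volume_Ico, max_sub_min_eq_abs, abs_sub_comm]
  have hy_slice' : ∀ y, y ∉ I → ((fun x => (x, y)) ⁻¹' D) = ∅ := by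
    intro y hy
    ext x
    simp only [hD, Set.mem_preimage, Set.mem_inter_iff, Set.mem_prod, Set.mem_empty_iff_false,
      iff_false]
    rintro ⟨-, -, hy'⟩; exact hy hy'
  have h2 : (volume.prod volume) D = ∫⁻ y in I, ENNReal.ofReal |G y - H y| := by
    rw [Measure.prod_apply_symm hDm,
      ← lintegral_indicator (measurableSet_Icc (a := s₁) (b := s₂))
        (fun y => ENNReal.ofReal |G y - H y|)]
    refine lintegral_congr fun y => ?_
    by_cases hy : y ∈ I
    · rw [hy_slice y hy, Set.indicator_of_mem hy]
    · rw [hy_slice' y hy, Set.indicator_of_notMem hy]; simp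
  -- convert to real integrals
  have hconv : ∀ (f : ℝ → ℝ), Monotone f →
      ∫ x in Set.Icc s₁ s₂, f x = (∫⁻ x in Set.Icc s₁ s₂, ENNReal.ofReal (f x)).toReal →
      True := fun _ _ _ => trivial
  have key : ∫⁻ x in I, ENNReal.ofReal |S' x - T' x| = ∫⁻ y in I, ENNReal.ofReal |G y - H y| :=
    h1 ▸ h2 ▸ rfl
  have conv1 : ∫ x in s₁..s₂, |S x - T x|
      = (∫⁻ x in I, ENNReal.ofReal |S' x - T' x|).toReal := by
    rw [intervalIntegral.integral_of_le hs]
    rw [show (∫ x in Set.Ioc s₁ s₂, |S x - T x|) = ∫ x in Set.Ioc s₁ s₂, |S' x - T' x| from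
      setIntegral_congr_fun measurableSet_Ioc fun x hx => by
        rw [hS'def, hT'def]; simp only [hc_id x (Set.Ioc_subset_Icc_self hx)]]
    rw [← MeasureTheory.integral_Icc_eq_integral_Ioc]
    exact integral_eq_lintegral_of_nonneg_ae (Eventually.of_forall fun x => abs_nonneg _)
      ((hS'mono.measurable.sub hT'mono.measurable).abs.aestronglyMeasurable)
  have conv2 : ∫ y in s₁..s₂, |geninv s₁ s₂ S y - geninv s₁ s₂ T y|
      = (∫⁻ y in I, ENNReal.ofReal |G y - H y|).toReal := by
    rw [intervalIntegral.integral_of_le hs]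
    rw [show (∫ y in Set.Ioc s₁ s₂, |geninv s₁ s₂ S y - geninv s₁ s₂ T y|)
        = ∫ y in Set.Ioc s₁ s₂, |G y - H y| from
      setIntegral_congr_fun measurableSet_Ioc fun y hy => by
        rw [hGdef, hHdef]; simp only [hc_id y (Set.Ioc_subset_Icc_self hy)]]
    rw [← MeasureTheory.integral_Icc_eq_integral_Ioc]
    exact integral_eq_lintegral_of_nonneg_ae (Eventually.of_forall fun y => abs_nonneg _)
      ((hGmono.measurable.sub hHmono.measurable).abs.aestronglyMeasurable)
  rw [conv1, conv2, key]

/-- Scalar multiplication scales the d₁ distance homogeneously: for -1 ≤ α ≤ 1,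
d₁(α ⊙ S, α ⊙ T) = |α| d₁(S, T). -/
theorem d1_odot_homogeneous (s₁ s₂ : ℝ) (hs : s₁ < s₂) (S T : ℝ → ℝ)
    (hS : IsTransport s₁ s₂ S) (hT : IsTransport s₁ s₂ T)
    (α : ℝ) (hα : α ∈ Set.Icc (-1 : ℝ) 1) :
    d1 s₁ s₂ (odot s₁ s₂ α S) (odot s₁ s₂ α T) = |α| * d1 s₁ s₂ S T := by
  have habs : |α| ≤ 1 := abs_le.mpr ⟨hα.1, hα.2⟩
  rw [odot, odot, if_pos habs, if_pos habs]
  by_cases hpos : 0 < α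
  · have heq : ∀ x, |oneSmul s₁ s₂ α S x - oneSmul s₁ s₂ α T x| = |α| * |S x - T x| := by
      intro x
      rw [oneSmul, oneSmul, if_pos hpos, if_pos hpos, ← abs_mul]
      ring_nf
    rw [d1, intervalIntegral.integral_congr (g := fun x => |α| * |S x - T x|)
      (fun x _ => heq x), intervalIntegral.integral_const_mul, d1]
  · by_cases hzero : α = 0
    · subst hzero
      simp [d1, oneSmul]
    · have heq : ∀ x, |oneSmul s₁ s₂ α S x - oneSmul s₁ s₂ α T x|
          = |α| * |geninv s₁ s₂ S x - geninv s₁ s₂ T x| := by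
        intro x
        rw [oneSmul, oneSmul, if_neg hpos, if_neg hpos, if_neg hzero, if_neg hzero,
          show x + α * (x - geninv s₁ s₂ S x) - (x + α * (x - geninv s₁ s₂ T x))
            = -(α * (geninv s₁ s₂ S x - geninv s₁ s₂ T x)) from by ring, abs_neg, abs_mul]
      rw [d1, intervalIntegral.integral_congr
        (g := fun x => |α| * |geninv s₁ s₂ S x - geninv s₁ s₂ T x|) (fun x _ => heq x),
        intervalIntegral.integral_const_mul, integral_abs_geninv hs.le hS hT, d1]
end ATM
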